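/- Let H be a complex Hilbert space, let Q, T : H → H be bounded linear operators with T compact, and let c > 0 satisfy Re⟨Q h, h⟩ ≥ c ‖h‖² for all h ∈ H. Let (V_j)_{j ∈ ℕ} be a sequence of pairwise orthogonal closed subspaces of H. Then there exists j₀ such that for every j ≥ j₀ and every h ∈ V_j, Re⟨(Q + T) h, h⟩ ≥ (c/3) ‖h‖². -/

import Mathlib

/-- A coercive operator plus a compact operator remains uniformly positive on the members
`V_j` of a sequence of pairwise orthogonal closed subspaces, for all sufficiently large `j`. -/
theorem coercive_plus_compact_eventually_positive
    {H : Type*} [NormedAddCommGroup H] [InnerProductSpace ℂ H] [CompleteSpace H]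
    (Q T : H →L[ℂ] H) (hT : IsCompactOperator T)
    (c : ℝ) (hc : 0 < c)
    (hQ : ∀ h : H, c * ‖h‖ ^ 2 ≤ (inner ℂ (Q h) h : ℂ).re)
    (V : ℕ → Submodule ℂ H) (hVclosed : ∀ j, IsClosed (V j : Set H))
    (hVorth : ∀ i j, i ≠ j → ∀ u ∈ V i, ∀ v ∈ V j, (inner ℂ u v : ℂ) = 0) :
    ∃ j₀ : ℕ, ∀ j ≥ j₀, ∀ h ∈ V j,
      (c / 3) * ‖h‖ ^ 2 ≤ (inner ℂ ((Q + T) h) h : ℂ).re := by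
  by_contra hcon
  push_neg at hcon
  -- extract a strictly increasing sequence of bad indices
  have hfreq : ∃ᶠ j in Filter.atTop, ∃ h ∈ V j,
      (inner ℂ ((Q + T) h) h : ℂ).re < (c / 3) * ‖h‖ ^ 2 := by
    rw [Filter.frequently_atTop]
    intro j₀
    obtain ⟨j, hj, h, hhV, hh⟩ := hcon j₀
    exact ⟨j, hj, h, hhV, hh⟩
  obtain ⟨φ, hφ, hbad⟩ := Filter.extraction_of_frequently_atTop hfreq
  -- choose normalized bad vectors
  choose h hhV hhbad using hbad
  have hne : ∀ k, h k ≠ 0 := by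
    intro k hk
    have := hhbad k
    rw [hk] at this
    simp at this
  set u : ℕ → H := fun k => (‖h k‖ : ℂ)⁻¹ • h k with hu
  have hunorm : ∀ k, ‖u k‖ = 1 := by
    intro k
    rw [hu]
    simp [norm_smul, norm_eq_zero, hne k]
  have huV : ∀ k, u k ∈ V (φ k) := fun k => (V (φ k)).smul_mem _ (hhV k)
  -- orthonormality
  have hon : Orthonormal ℂ u := by
    rw [orthonormal_iff_ite]
    intro i j
    by_cases hij : i = j
    · subst hij
      simp only [if_pos rfl]
      rw [inner_self_eq_norm_sq_to_K (𝕜 := ℂ), hunorm i]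
      norm_num
    · simp only [if_neg hij]
      exact hVorth (φ i) (φ j) (fun hh => hij (hφ.injective hh)) (u i) (huV i) (u j) (huV j)
  -- coercivity fails on u k
  have hTu : ∀ k, (inner ℂ (T (u k)) (u k) : ℂ).re ≤ -(2 * c / 3) := by
    intro k
    have hb := hhbad k
    have hs : (inner ℂ ((Q + T) (u k)) (u k) : ℂ).re < c / 3 := by
      have hnorm : (0 : ℝ) < ‖h k‖ := norm_pos_iff.mpr (hne k)
      have : (inner ℂ ((Q + T) (u k)) (u k) : ℂ)
          = ((‖h k‖ : ℂ)⁻¹ * (starRingEnd ℂ) (‖h k‖ : ℂ)⁻¹) * inner ℂ ((Q + T) (h k)) (h k) := by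
        rw [hu]
        simp only [map_smul, inner_smul_left, inner_smul_right]
        ring
      rw [this]
      have hconj : ((‖h k‖ : ℂ)⁻¹ * (starRingEnd ℂ) (‖h k‖ : ℂ)⁻¹) = ((‖h k‖⁻¹ ^ 2 : ℝ) : ℂ) := by
        simp [Complex.conj_ofReal, ← Complex.ofReal_inv, ← Complex.ofReal_mul, sq]
      rw [hconj]
      rw [Complex.re_ofReal_mul]
      have hlt : ‖h k‖⁻¹ ^ 2 * (inner ℂ ((Q + T) (h k)) (h k) : ℂ).re
          < ‖h k‖⁻¹ ^ 2 * ((c / 3) * ‖h k‖ ^ 2) := by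
        apply mul_lt_mul_of_pos_left hb
        positivity
      calc ‖h k‖⁻¹ ^ 2 * (inner ℂ ((Q + T) (h k)) (h k) : ℂ).re
          < ‖h k‖⁻¹ ^ 2 * ((c / 3) * ‖h k‖ ^ 2) := hlt
        _ = c / 3 := by field_simp
    have hQu : c ≤ (inner ℂ (Q (u k)) (u k) : ℂ).re := by
      have := hQ (u k)
      rwa [hunorm k, one_pow, mul_one] at this
    have hsum : (inner ℂ ((Q + T) (u k)) (u k) : ℂ).re
        = (inner ℂ (Q (u k)) (u k) : ℂ).re + (inner ℂ (T (u k)) (u k) : ℂ).re := by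
      simp [inner_add_left]
    linarith
  -- compactness: extract convergent subsequence of T (u k)
  obtain ⟨K, hK, hTK⟩ := hT.image_closedBall_subset_compact (f := (T : H →ₛₗ[RingHom.id ℂ] H)) 1
  have hmem : ∀ k, T (u k) ∈ K := by
    intro k
    apply hTK
    exact ⟨u k, by simp [Metric.mem_closedBall, (hunorm k).le], rfl⟩
  obtain ⟨y, _, ψ, hψ, hlim⟩ := hK.tendsto_subseq hmem
  -- Bessel: ⟨y, u k⟩ → 0
  have hbes : Filter.Tendsto (fun k => ‖(inner ℂ (u k) y : ℂ)‖) Filter.atTop (nhds 0) := by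
    have hsumm : Summable fun k => ‖(inner ℂ (u k) y : ℂ)‖ ^ 2 :=
      hon.inner_products_summable y
    have h0 : Filter.Tendsto (fun k => ‖(inner ℂ (u k) y : ℂ)‖ ^ 2) Filter.atTop (nhds 0) :=
      hsumm.tendsto_atTop_zero
    have := h0.sqrt
    simpa [Real.sqrt_sq (norm_nonneg _)] using this
  -- conclude the inner products tend to 0
  have htend : Filter.Tendsto (fun m => (inner ℂ (T (u (ψ m))) (u (ψ m)) : ℂ).re)
      Filter.atTop (nhds 0) := by
    have hbound : ∀ m, ‖(inner ℂ (T (u (ψ m))) (u (ψ m)) : ℂ).re‖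
        ≤ ‖T (u (ψ m)) - y‖ + ‖(inner ℂ (u (ψ m)) y : ℂ)‖ := by
      intro m
      have : (inner ℂ (T (u (ψ m))) (u (ψ m)) : ℂ)
          = inner ℂ (T (u (ψ m)) - y) (u (ψ m)) + inner ℂ y (u (ψ m)) := by
        rw [← inner_add_left, sub_add_cancel]
      calc ‖(inner ℂ (T (u (ψ m))) (u (ψ m)) : ℂ).re‖
          ≤ ‖(inner ℂ (T (u (ψ m))) (u (ψ m)) : ℂ)‖ := Complex.abs_re_le_norm _
        _ = ‖inner ℂ (T (u (ψ m)) - y) (u (ψ m)) + (inner ℂ y (u (ψ m)) : ℂ)‖ := by rw [this]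
        _ ≤ ‖(inner ℂ (T (u (ψ m)) - y) (u (ψ m)) : ℂ)‖ + ‖(inner ℂ y (u (ψ m)) : ℂ)‖ :=
            norm_add_le _ _
        _ ≤ ‖T (u (ψ m)) - y‖ * ‖u (ψ m)‖ + ‖(inner ℂ y (u (ψ m)) : ℂ)‖ := by
            gcongr; exact norm_inner_le_norm _ _
        _ = ‖T (u (ψ m)) - y‖ + ‖(inner ℂ (u (ψ m)) y : ℂ)‖ := by
            rw [hunorm, mul_one, norm_inner_symm]
    have hA : Filter.Tendsto (fun m => ‖T (u (ψ m)) - y‖) Filter.atTop (nhds 0) := by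
      have := tendsto_iff_norm_sub_tendsto_zero.mp hlim
      simpa [Function.comp] using this
    have hB : Filter.Tendsto (fun m => ‖(inner ℂ (u (ψ m)) y : ℂ)‖) Filter.atTop (nhds 0) :=
      hbes.comp hψ.tendsto_atTop
    have hAB : Filter.Tendsto
        (fun m => ‖T (u (ψ m)) - y‖ + ‖(inner ℂ (u (ψ m)) y : ℂ)‖) Filter.atTop (nhds 0) := by
      simpa using hA.add hB
    apply squeeze_zero_norm hbound hAB
  -- contradiction
  have hle : ∀ m, (inner ℂ (T (u (ψ m))) (u (ψ m)) : ℂ).re ≤ -(2 * c / 3) :=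
    fun m => hTu (ψ m)
  have h0le : (0 : ℝ) ≤ -(2 * c / 3) :=
    le_of_tendsto_of_tendsto htend tendsto_const_nhds
      (Filter.Eventually.of_forall hle)
  linarith
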